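/- Let G be a simple graph in which every edge lies in a 3-clique, and let C(G) be the associated monotone 1-in-3 instance. Then an assignment ν : V × {0,1,2} → Bool 1-in-3 satisfies C(G) if and only if there is a proper 3-colouring c of G such that for all vertices i and colours j, ν(i,j) = true ⟺ c(i) = j. In particular, C(G) is 1-in-3 satisfiable if and only if G is 3-colourable. -/
import Mathlib


/-- Exactly one of three Boolean values is `true`. -/
def oneOf3 (a b c : Bool) : Prop :=
  (a = true ∧ b = false ∧ c = false) ∨ (a = false ∧ b = true ∧ c = false) ∨
  (a = false ∧ b = false ∧ c = true)

/-- `ν` 1-in-3 satisfies the monotone 1-in-3 instance `C(G)`: for each vertex `i` exactly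
one of the variables `(i,0), (i,1), (i,2)` is true, and for each 3-clique `{i₁,i₂,i₃}` of
`G` and each colour `j` exactly one of `(i₁,j), (i₂,j), (i₃,j)` is true. -/
def CSat {V : Type} (G : SimpleGraph V) (ν : V × Fin 3 → Bool) : Prop :=
  (∀ i : V, oneOf3 (ν (i, 0)) (ν (i, 1)) (ν (i, 2))) ∧
  (∀ i₁ i₂ i₃ : V, G.Adj i₁ i₂ → G.Adj i₁ i₃ → G.Adj i₂ i₃ →
    ∀ j : Fin 3, oneOf3 (ν (i₁, j)) (ν (i₂, j)) (ν (i₃, j)))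

/-- For a simple graph `G` in which every edge lies in a 3-clique:
an assignment `ν` 1-in-3 satisfies `C(G)` iff it is induced by a proper 3-colouring of
`G`; in particular `C(G)` is 1-in-3 satisfiable iff `G` is 3-colourable. -/
theorem stmt_13 {V : Type} (G : SimpleGraph V)
    (htri : ∀ u v : V, G.Adj u v → ∃ w : V, G.Adj u w ∧ G.Adj v w) :
    (∀ ν : V × Fin 3 → Bool,
      CSat G ν ↔
        ∃ c : V → Fin 3, (∀ u v : V, G.Adj u v → c u ≠ c v) ∧
          ∀ (i : V) (j : Fin 3), ν (i, j) = true ↔ c i = j) ∧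
    ((∃ ν : V × Fin 3 → Bool, CSat G ν) ↔
      ∃ c : V → Fin 3, ∀ u v : V, G.Adj u v → c u ≠ c v) := by
  have main : ∀ ν : V × Fin 3 → Bool,
      CSat G ν ↔
        ∃ c : V → Fin 3, (∀ u v : V, G.Adj u v → c u ≠ c v) ∧
          ∀ (i : V) (j : Fin 3), ν (i, j) = true ↔ c i = j := by
    intro ν
    constructor
    · rintro ⟨h1, h2⟩
      refine ⟨fun i => if ν (i, 0) then 0 else if ν (i, 1) then 1 else 2, ?_, ?_⟩
      · intro u v huv hc
        obtain ⟨w, huw, hvw⟩ := htri u v huv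
        set c : V → Fin 3 := fun i => if ν (i, 0) then 0 else if ν (i, 1) then 1 else 2
        have key : ∀ i, ν (i, c i) = true := by
          intro i
          rcases h1 i with ⟨ha, _, _⟩ | ⟨ha, hb, _⟩ | ⟨ha, hb, hcc⟩ <;>
            simp [c, ha] <;> simp [hb] <;> simp [hcc]
        have hu := key u
        have hv := key v
        rw [hc] at hu
        rcases h2 u v w huv huw hvw (c v) with ⟨_, hb, _⟩ | ⟨ha, _, _⟩ | ⟨ha, hb, _⟩ <;>
          simp_all
      · intro i j
        set c : V → Fin 3 := fun i => if ν (i, 0) then 0 else if ν (i, 1) then 1 else 2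
        fin_cases j <;>
          rcases h1 i with ⟨ha, hb, hcc⟩ | ⟨ha, hb, hcc⟩ | ⟨ha, hb, hcc⟩ <;>
          simp [c, ha, hb, hcc]
    · rintro ⟨c, hproper, hν⟩
      have hval : ∀ i j, ν (i, j) = decide (c i = j) := by
        intro i j
        by_cases h : c i = j
        · simp [h, (hν i j).mpr h]
        · have hne : ν (i, j) ≠ true := fun hh => h ((hν i j).mp hh)
          simp [h, Bool.not_eq_true] at hne ⊢
          exact hne
      constructor
      · intro i
        rw [hval, hval, hval]
        unfold oneOf3
        have := (c i).isLt
        simp only [decide_eq_true_eq, decide_eq_false_iff_not, Fin.ext_iff,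
          Fin.val_zero, Fin.val_one, Fin.val_two]
        omega
      · intro i₁ i₂ i₃ h12 h13 h23 j
        rw [hval, hval, hval]
        unfold oneOf3
        have d12 : c i₁ ≠ c i₂ := hproper _ _ h12
        have d13 : c i₁ ≠ c i₃ := hproper _ _ h13
        have d23 : c i₂ ≠ c i₃ := hproper _ _ h23
        have b1 := (c i₁).isLt
        have b2 := (c i₂).isLt
        have b3 := (c i₃).isLt
        have bj := j.isLt
        simp only [decide_eq_true_eq, decide_eq_false_iff_not, ne_eq, Fin.ext_iff] at *
        omega
  refine ⟨main, ?_, ?_⟩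
  · rintro ⟨ν, hν⟩
    obtain ⟨c, hc, _⟩ := (main ν).mp hν
    exact ⟨c, hc⟩
  · rintro ⟨c, hc⟩
    exact ⟨fun p => decide (c p.1 = p.2), (main _).mpr ⟨c, hc, by simp⟩⟩
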